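/- For all w in the closed l∞-ball B̄_β, the mini-batch zeroth-order gradient estimator satisfies E[‖∇f_α(w) − (1/(Mα)) Σ_{i=1}^M dF(w, u^i, ξ^i)‖₂²] ≤ d·Q/M, where Q := E[L₀(ξ)²]. -/

import Mathlib

open MeasureTheory Filter
open scoped Classical BigOperators

noncomputable section

/-- The closed `l∞`-ball of radius `r` centered at `0` in `ℝ^d`. -/
def Binf (d : ℕ) (r : ℝ) : Set (EuclideanSpace ℝ (Fin d)) := {z | ∀ i, |z i| ≤ r}

/-- The uniform probability distribution on the closed `l∞`-ball of radius `r` in `ℝ^d`. -/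
def unifMeas (d : ℕ) (r : ℝ) : Measure (EuclideanSpace ℝ (Fin d)) :=
  (volume (Binf d r))⁻¹ • volume.restrict (Binf d r)

/-- The point `w + u` with its `i`-th coordinate replaced by `w i + s`. -/
def shiftPt {d : ℕ} (s : ℝ) (w u : EuclideanSpace ℝ (Fin d)) (i : Fin d) :
    EuclideanSpace ℝ (Fin d) :=
  w + u + (s - u i) • EuclideanSpace.single i (1 : ℝ)

/-- The finite difference `df_i(w, u_{∖i})` of a function `f : ℝ^d → ℝ`. -/
def dfFD {d : ℕ} (α : ℝ) (f : EuclideanSpace ℝ (Fin d) → ℝ)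
    (i : Fin d) (w u : EuclideanSpace ℝ (Fin d)) : ℝ :=
  f (shiftPt (α / 2) w u i) - f (shiftPt (-(α / 2)) w u i)

/-- The finite-difference vector `dF(w,u,ξ)` whose `i`-th component is
`F(…, w_i + α/2, …, ξ) − F(…, w_i − α/2, …, ξ)`. -/
def dFvec {d p : ℕ} (α : ℝ)
    (F : EuclideanSpace ℝ (Fin d) → EuclideanSpace ℝ (Fin p) → ℝ)
    (w u : EuclideanSpace ℝ (Fin d)) (ξ : EuclideanSpace ℝ (Fin p)) :
    EuclideanSpace ℝ (Fin d) :=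
  ∑ i : Fin d,
    (F (shiftPt (α / 2) w u i) ξ - F (shiftPt (-(α / 2)) w u i) ξ) • EuclideanSpace.single i (1 : ℝ)

/-- `f(w) := E[F(w,ξ)]`. -/
def fbar {d p : ℕ} (μξ : Measure (EuclideanSpace ℝ (Fin p)))
    (F : EuclideanSpace ℝ (Fin d) → EuclideanSpace ℝ (Fin p) → ℝ)
    (w : EuclideanSpace ℝ (Fin d)) : ℝ := ∫ ξ, F w ξ ∂μξ

/-- The randomized smoothing `f_α(w) := E[f(w+u)]`, `u` uniform on `B̄_{α/2}`. -/
def smoothed {d : ℕ} (α : ℝ) (f : EuclideanSpace ℝ (Fin d) → ℝ)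
    (w : EuclideanSpace ℝ (Fin d)) : ℝ := ∫ u, f (w + u) ∂(unifMeas d (α / 2))

section Aux

lemma measurableSet_Binf (d : ℕ) (r : ℝ) : MeasurableSet (Binf d r) := by
  have h : Binf d r = ⋂ i, {z : EuclideanSpace ℝ (Fin d) | |z i| ≤ r} := by
    ext z; simp [Binf]
  rw [h]
  refine MeasurableSet.iInter fun i => measurableSet_le ?_ measurable_const
  have hm : Measurable fun z : EuclideanSpace ℝ (Fin d) => z i :=
    (EuclideanSpace.proj i).continuous.measurable
  simpa [Real.norm_eq_abs] using hm.norm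

lemma shiftPt_apply {d : ℕ} (s : ℝ) (w u : EuclideanSpace ℝ (Fin d)) (i j : Fin d) :
    shiftPt s w u i j = if j = i then w i + s else w j + u j := by
  simp only [shiftPt, PiLp.add_apply, PiLp.smul_apply, EuclideanSpace.single_apply,
    smul_eq_mul]
  split_ifs with h
  · subst h; ring
  · ring

lemma shiftPt_mem_Binf {d : ℕ} {b a κ : ℝ} {w u : EuclideanSpace ℝ (Fin d)}
    (hw : w ∈ Binf d b) (hu : u ∈ Binf d a) {s : ℝ} (hs : |s| ≤ a) (hκ : b + a ≤ κ)
    (i : Fin d) : shiftPt s w u i ∈ Binf d κ := by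
  intro j
  rw [shiftPt_apply]
  split_ifs with h
  · exact le_trans (abs_add_le _ _) (le_trans (add_le_add (hw i) hs) hκ)
  · exact le_trans (abs_add_le _ _) (le_trans (add_le_add (hw j) (hu j)) hκ)

lemma shiftPt_sub {d : ℕ} (α : ℝ) (w u : EuclideanSpace ℝ (Fin d)) (i : Fin d) :
    shiftPt (α / 2) w u i - shiftPt (-(α / 2)) w u i = α • EuclideanSpace.single i (1 : ℝ) := by
  ext j
  simp only [PiLp.sub_apply, shiftPt_apply, PiLp.smul_apply, EuclideanSpace.single_apply,
    smul_eq_mul]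
  split_ifs with h
  · ring
  · ring

lemma norm_shiftPt_sub {d : ℕ} {α : ℝ} (hα : 0 ≤ α) (w u : EuclideanSpace ℝ (Fin d)) (i : Fin d) :
    ‖shiftPt (α / 2) w u i - shiftPt (-(α / 2)) w u i‖ = α := by
  rw [shiftPt_sub, norm_smul, EuclideanSpace.norm_single]
  simp [abs_of_nonneg hα]

/-- The `k`-th component of the finite-difference vector, as a function of the pair `(u, ξ)`. -/
def phiZ {d p : ℕ} (α : ℝ) (F : EuclideanSpace ℝ (Fin d) → EuclideanSpace ℝ (Fin p) → ℝ)
    (w : EuclideanSpace ℝ (Fin d)) (k : Fin d)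
    (q : EuclideanSpace ℝ (Fin d) × EuclideanSpace ℝ (Fin p)) : ℝ :=
  F (shiftPt (α / 2) w q.1 k) q.2 - F (shiftPt (-(α / 2)) w q.1 k) q.2

lemma dFvec_apply {d p : ℕ} (α : ℝ)
    (F : EuclideanSpace ℝ (Fin d) → EuclideanSpace ℝ (Fin p) → ℝ)
    (w u : EuclideanSpace ℝ (Fin d)) (ξ : EuclideanSpace ℝ (Fin p)) (k : Fin d) :
    dFvec α F w u ξ k = phiZ α F w k (u, ξ) := by
  simp only [dFvec]
  rw [WithLp.ofLp_sum, Finset.sum_apply]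
  simp [EuclideanSpace.single_apply, PiLp.smul_apply, phiZ]

end Aux

/-- For all `w ∈ B̄_β`, the mini-batch zeroth-order gradient estimator built
from `M` i.i.d. samples `(u^i, ξ^i)` (each `u^i` uniform on `B̄_{α/2}` independent of `ξ^i ∼ ξ`)
satisfies `E[‖∇f_α(w) − (1/(Mα)) Σᵢ dF(w,u^i,ξ^i)‖₂²] ≤ d·Q/M`, where `Q := E[L₀(ξ)²]`
and `∇f_α(w) = α⁻¹ E[dF(w,u,ξ)]`. -/

theorem zeroth_order_estimator_variance
    (d p : ℕ) (α β κ : ℝ) (hα : 0 < α) (hβ : 0 < β) (hκ : β + α / 2 < κ)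
    (μξ : Measure (EuclideanSpace ℝ (Fin p))) [IsProbabilityMeasure μξ]
    (F : EuclideanSpace ℝ (Fin d) → EuclideanSpace ℝ (Fin p) → ℝ)
    (hFmeas : Measurable (Function.uncurry F))
    (hFcont : ∀ ξ, ContinuousOn (fun w => F w ξ) (Binf d κ))
    (L0 : EuclideanSpace ℝ (Fin p) → ℝ) (hL0meas : Measurable L0)
    (hL0sq : Integrable (fun ξ => (L0 ξ) ^ 2) μξ)
    (hlip : ∀ᵐ ξ ∂μξ, ∀ w ∈ Binf d κ, ∀ w' ∈ Binf d κ,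
      |F w ξ - F w' ξ| ≤ L0 ξ * ‖w - w'‖)
    (hFint : ∀ w ∈ Binf d κ, Integrable (fun ξ => F w ξ) μξ)
    (Ω : Type) [MeasurableSpace Ω] (P : Measure Ω) [IsProbabilityMeasure P]
    (M : ℕ) (hM : 1 ≤ M)
    (U : Fin M → Ω → EuclideanSpace ℝ (Fin d))
    (X : Fin M → Ω → EuclideanSpace ℝ (Fin p))
    (hUmeas : ∀ i, Measurable (U i)) (hXmeas : ∀ i, Measurable (X i))
    (hindep : ProbabilityTheory.iIndepFun
      (fun i ω => (U i ω, X i ω)) P)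
    (hdist : ∀ i, P.map (fun ω => (U i ω, X i ω)) = (unifMeas d (α / 2)).prod μξ)
    :
    ∀ w ∈ Binf d β,
      (∫ ω, ‖(α⁻¹ • ∫ q : EuclideanSpace ℝ (Fin d) × EuclideanSpace ℝ (Fin p),
              dFvec α F w q.1 q.2 ∂((unifMeas d (α / 2)).prod μξ)) -
            ((M : ℝ) * α)⁻¹ • ∑ i : Fin M, dFvec α F w (U i ω) (X i ω)‖ ^ 2 ∂P)
        ≤ (d : ℝ) * (∫ ξ, (L0 ξ) ^ 2 ∂μξ) / (M : ℝ) := by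
  intro w hw
  set ν : Measure (EuclideanSpace ℝ (Fin d) × EuclideanSpace ℝ (Fin p)) :=
    (unifMeas d (α / 2)).prod μξ with hνdef
  set Q : ℝ := ∫ ξ, (L0 ξ) ^ 2 ∂μξ with hQdef
  have hM0 : (M : ℝ) ≠ 0 := Nat.cast_ne_zero.2 (by omega)
  -- measurability
  have hYmeas : ∀ i, Measurable (fun ω => (U i ω, X i ω)) :=
    fun i => (hUmeas i).prodMk (hXmeas i)
  have hshift : ∀ (s : ℝ) (k : Fin d),
      Measurable fun u : EuclideanSpace ℝ (Fin d) => shiftPt s w u k := by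
    intro s k
    have h1 : Continuous fun u : EuclideanSpace ℝ (Fin d) => shiftPt s w u k := by
      unfold shiftPt
      exact (continuous_const.add continuous_id).add
        ((continuous_const.sub (EuclideanSpace.proj k).continuous).smul continuous_const)
    exact h1.measurable
  have hφmeas : ∀ k, Measurable (phiZ α F w k) := by
    intro k
    have h1 : Measurable fun q : EuclideanSpace ℝ (Fin d) × EuclideanSpace ℝ (Fin p) =>
        (shiftPt (α / 2) w q.1 k, q.2) :=
      ((hshift _ k).comp measurable_fst).prodMk measurable_snd
    have h2 : Measurable fun q : EuclideanSpace ℝ (Fin d) × EuclideanSpace ℝ (Fin p) =>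
        (shiftPt (-(α / 2)) w q.1 k, q.2) :=
      ((hshift _ k).comp measurable_fst).prodMk measurable_snd
    exact (hFmeas.comp h1).sub (hFmeas.comp h2)
  -- probability measures
  haveI hνP : IsProbabilityMeasure ν := by
    rw [← hdist ⟨0, hM⟩]
    exact Measure.isProbabilityMeasure_map (hYmeas ⟨0, hM⟩).aemeasurable
  haveI hunifP : IsProbabilityMeasure (unifMeas d (α / 2)) := by
    have h := measure_univ (μ := ν)
    rw [hνdef, ← Set.univ_prod_univ, Measure.prod_prod, measure_univ (μ := μξ), mul_one] at h
    exact ⟨h⟩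
  have hsnd : ν.map Prod.snd = μξ := by
    rw [hνdef, Measure.map_snd_prod, measure_univ, one_smul]
  -- a.e. bound on the components
  have humem : ∀ᵐ u ∂unifMeas d (α / 2), u ∈ Binf d (α / 2) := by
    unfold unifMeas
    exact Measure.ae_smul_measure (ae_restrict_mem (measurableSet_Binf _ _)) _
  have hbdd : ∀ᵐ q ∂ν, ∀ k, |phiZ α F w k q| ≤ α * L0 q.2 := by
    rw [hνdef, Measure.ae_prod_iff_ae_ae]
    · filter_upwards [humem] with u hu
      filter_upwards [hlip] with ξ hξ
      intro k
      have hs2 : |α / 2| ≤ α / 2 := by rw [abs_of_nonneg (by positivity)]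
      have hs3 : |(-(α / 2))| ≤ α / 2 := by rw [abs_neg, abs_of_nonneg (by positivity)]
      have ha : shiftPt (α / 2) w u k ∈ Binf d κ := shiftPt_mem_Binf hw hu hs2 hκ.le k
      have hb : shiftPt (-(α / 2)) w u k ∈ Binf d κ := shiftPt_mem_Binf hw hu hs3 hκ.le k
      have h := hξ _ ha _ hb
      rw [norm_shiftPt_sub hα.le] at h
      simpa [phiZ, mul_comm] using h
    · have hset : {q : EuclideanSpace ℝ (Fin d) × EuclideanSpace ℝ (Fin p) |
          ∀ k, |phiZ α F w k q| ≤ α * L0 q.2}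
          = ⋂ k, {q | |phiZ α F w k q| ≤ α * L0 q.2} := by
        ext q; simp
      rw [hset]
      refine MeasurableSet.iInter fun k => measurableSet_le ?_ ?_
      · simpa [Real.norm_eq_abs] using (hφmeas k).norm
      · exact (hL0meas.comp measurable_snd).const_mul α
  -- L² facts
  have hL0ν : Integrable (fun q : EuclideanSpace ℝ (Fin d) × EuclideanSpace ℝ (Fin p) =>
      L0 q.2 ^ 2) ν := by
    have hgm : AEStronglyMeasurable (fun ξ => L0 ξ ^ 2) (ν.map Prod.snd) :=
      ((hL0meas.pow_const 2).aestronglyMeasurable)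
    exact (integrable_map_measure hgm measurable_snd.aemeasurable).mp (by rwa [hsnd])
  have hL0int_eq : ∫ q, L0 q.2 ^ 2 ∂ν = Q := by
    rw [hQdef, ← hsnd, integral_map measurable_snd.aemeasurable]
    rw [hsnd]
    exact (hL0meas.pow_const 2).aestronglyMeasurable
  have hφsq_int : ∀ k, Integrable (fun q => (phiZ α F w k q) ^ 2) ν := by
    intro k
    refine Integrable.mono' (hL0ν.const_mul (α ^ 2))
      ((hφmeas k).pow_const 2).aestronglyMeasurable ?_
    filter_upwards [hbdd] with q hq
    have h := hq k
    have h2 : |phiZ α F w k q| ^ 2 ≤ (α * L0 q.2) ^ 2 :=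
      pow_le_pow_left₀ (abs_nonneg _) h 2
    calc ‖(phiZ α F w k q) ^ 2‖ = |phiZ α F w k q| ^ 2 := by
          rw [Real.norm_eq_abs, abs_of_nonneg (sq_nonneg _), sq_abs]
      _ ≤ (α * L0 q.2) ^ 2 := h2
      _ = α ^ 2 * L0 q.2 ^ 2 := by ring
  have hφmem : ∀ k, MemLp (phiZ α F w k) 2 ν := fun k =>
    (memLp_two_iff_integrable_sq (hφmeas k).aestronglyMeasurable).2 (hφsq_int k)
  have hφint : ∀ k, Integrable (phiZ α F w k) ν := fun k => (hφmem k).integrable one_le_two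
  have hφsq_le : ∀ k, ∫ q, (phiZ α F w k q) ^ 2 ∂ν ≤ α ^ 2 * Q := by
    intro k
    calc ∫ q, (phiZ α F w k q) ^ 2 ∂ν ≤ ∫ q, α ^ 2 * L0 q.2 ^ 2 ∂ν := by
          refine integral_mono_ae (hφsq_int k) (hL0ν.const_mul _) ?_
          filter_upwards [hbdd] with q hq
          have h2 : |phiZ α F w k q| ^ 2 ≤ (α * L0 q.2) ^ 2 :=
            pow_le_pow_left₀ (abs_nonneg _) (hq k) 2
          calc (phiZ α F w k q) ^ 2 = |phiZ α F w k q| ^ 2 := (sq_abs _).symm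
            _ ≤ (α * L0 q.2) ^ 2 := h2
            _ = α ^ 2 * L0 q.2 ^ 2 := by ring
      _ = α ^ 2 * Q := by rw [integral_const_mul, hL0int_eq]
  -- the vector-valued function and its mean
  have hgmeas : Measurable (fun q : EuclideanSpace ℝ (Fin d) × EuclideanSpace ℝ (Fin p) =>
      dFvec α F w q.1 q.2) := by
    unfold dFvec
    refine Finset.measurable_sum _ fun i _ => ?_
    have : Measurable fun q : EuclideanSpace ℝ (Fin d) × EuclideanSpace ℝ (Fin p) =>
        phiZ α F w i q := hφmeas i
    exact this.smul_const _
  have hgnormsq : ∀ q : EuclideanSpace ℝ (Fin d) × EuclideanSpace ℝ (Fin p),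
      ‖dFvec α F w q.1 q.2‖ ^ 2 = ∑ k, (phiZ α F w k q) ^ 2 := by
    intro q
    rw [EuclideanSpace.norm_eq, Real.sq_sqrt (by positivity)]
    refine Finset.sum_congr rfl fun k _ => ?_
    rw [dFvec_apply, Real.norm_eq_abs, sq_abs]
  have hgint : Integrable (fun q : EuclideanSpace ℝ (Fin d) × EuclideanSpace ℝ (Fin p) =>
      dFvec α F w q.1 q.2) ν := by
    have h2 : Integrable (fun q => ∑ k, (phiZ α F w k q) ^ 2) ν :=
      integrable_finset_sum _ fun k _ => hφsq_int k
    have hmem : MemLp (fun q : EuclideanSpace ℝ (Fin d) × EuclideanSpace ℝ (Fin p) =>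
        dFvec α F w q.1 q.2) 2 ν := by
      rw [memLp_two_iff_integrable_sq_norm hgmeas.aestronglyMeasurable]
      exact h2.congr (ae_of_all _ fun q => (hgnormsq q).symm)
    exact hmem.integrable one_le_two
  set m : EuclideanSpace ℝ (Fin d) := ∫ q, dFvec α F w q.1 q.2 ∂ν with hmdef
  have hmk : ∀ k, m k = ∫ q, phiZ α F w k q ∂ν := by
    intro k
    have h := ContinuousLinearMap.integral_comp_comm (EuclideanSpace.proj k) hgint
    simp only [EuclideanSpace.proj, PiLp.proj_apply, dFvec_apply] at h
    rw [hmdef]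
    exact h.symm
  -- pull everything back to Ω
  set W : Fin M → Fin d → Ω → ℝ :=
    fun i k ω => m k - phiZ α F w k (U i ω, X i ω) with hWdef
  have hWcomp : ∀ i k, W i k = (fun q => m k - phiZ α F w k q) ∘ (fun ω => (U i ω, X i ω)) :=
    fun i k => rfl
  have hint_phi_comp : ∀ i k,
      ∫ ω, phiZ α F w k (U i ω, X i ω) ∂P = ∫ q, phiZ α F w k q ∂ν := by
    intro i k
    rw [← hdist i, integral_map (hYmeas i).aemeasurable]
    rw [hdist i]
    exact (hφmeas k).aestronglyMeasurable
  have hWmem : ∀ i k, MemLp (fun ω => phiZ α F w k (U i ω, X i ω)) 2 P := by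
    intro i k
    have h : MemLp (phiZ α F w k) 2 (P.map (fun ω => (U i ω, X i ω))) := by
      rw [hdist i]; exact hφmem k
    exact (memLp_map_measure_iff (hφmeas k).aestronglyMeasurable
      (hYmeas i).aemeasurable).1 h
  have hWmem' : ∀ i k, MemLp (W i k) 2 P :=
    fun i k => (memLp_const (m k)).sub (hWmem i k)
  have hprod_int : ∀ i j k, Integrable (fun ω => W i k ω * W j k ω) P := by
    intro i j k
    have h := ((hWmem' j k).smul (hWmem' i k)
      (p := 2) (q := 2) (r := 1))
    have h2 := memLp_one_iff_integrable.1 h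
    exact h2.congr (ae_of_all _ fun ω => by simp [smul_eq_mul])
  have hmean : ∀ i k, ∫ ω, W i k ω ∂P = 0 := by
    intro i k
    have hint : Integrable (fun ω => phiZ α F w k (U i ω, X i ω)) P :=
      (hWmem i k).integrable one_le_two
    rw [hWdef]
    simp only []
    rw [integral_sub (integrable_const _) hint, integral_const, hint_phi_comp i k, ← hmk k]
    simp
  have hcross : ∀ i j, i ≠ j → ∀ k, ∫ ω, W i k ω * W j k ω ∂P = 0 := by
    intro i j hij k
    have hind : ProbabilityTheory.IndepFun (fun ω => (U i ω, X i ω))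
        (fun ω => (U j ω, X j ω)) P := hindep.indepFun hij
    have hφm : Measurable fun q : EuclideanSpace ℝ (Fin d) × EuclideanSpace ℝ (Fin p) =>
        m k - phiZ α F w k q := measurable_const.sub (hφmeas k)
    have hind2 : ProbabilityTheory.IndepFun (W i k) (W j k) P := by
      rw [hWcomp i k, hWcomp j k]
      exact hind.comp hφm hφm
    have h := hind2.integral_mul_eq_mul_integral (hWmem' i k).aestronglyMeasurable
      (hWmem' j k).aestronglyMeasurable
    have h2 : ∫ ω, W i k ω * W j k ω ∂P = ∫ ω, (W i k * W j k) ω ∂P := rfl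
    rw [h2]
    rw [h, hmean i k, hmean j k, mul_zero]
  have hvar : ∀ i k, ∫ ω, (W i k ω) ^ 2 ∂P ≤ α ^ 2 * Q := by
    intro i k
    have hcv : ∫ ω, (W i k ω) ^ 2 ∂P = ∫ q, (m k - phiZ α F w k q) ^ 2 ∂ν := by
      rw [← hdist i, integral_map (f := fun q => (m k - phiZ α F w k q) ^ 2) (hYmeas i).aemeasurable
        (((measurable_const.sub (hφmeas k)).pow_const 2).aestronglyMeasurable)]
    rw [hcv]
    have hexp : ∫ q, (m k - phiZ α F w k q) ^ 2 ∂ν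
        = ∫ q, (phiZ α F w k q) ^ 2 ∂ν - (m k) ^ 2 := by
      have hptw : ∀ q, (m k - phiZ α F w k q) ^ 2
          = ((phiZ α F w k q) ^ 2 - (2 * m k) * phiZ α F w k q) + (m k) ^ 2 := by
        intro q; ring
      have hint1 : Integrable (fun q => (phiZ α F w k q) ^ 2 - (2 * m k) * phiZ α F w k q) ν :=
        (hφsq_int k).sub ((hφint k).const_mul _)
      rw [integral_congr_ae (ae_of_all _ hptw), integral_add hint1 (integrable_const _),
        integral_sub (hφsq_int k) ((hφint k).const_mul _), integral_const_mul,
        ← hmk k, integral_const]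
      simp only [measure_univ, ENNReal.toReal_one, smul_eq_mul, one_mul, probReal_univ]
      ring
    rw [hexp]
    have h := hφsq_le k
    nlinarith [sq_nonneg (m k)]
  -- pointwise identity for the integrand
  set c : ℝ := ((M : ℝ) * α)⁻¹ with hcdef
  have hpt : ∀ ω, ‖(α⁻¹ • m) - c • ∑ i, dFvec α F w (U i ω) (X i ω)‖ ^ 2
      = c ^ 2 * ∑ k, (∑ i, W i k ω) ^ 2 := by
    intro ω
    have h1 : (α⁻¹ • m) - c • ∑ i, dFvec α F w (U i ω) (X i ω)
        = c • ∑ i : Fin M, (m - dFvec α F w (U i ω) (X i ω)) := by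
      rw [Finset.sum_sub_distrib, smul_sub, Finset.sum_const, Finset.card_univ,
        Fintype.card_fin, ← Nat.cast_smul_eq_nsmul ℝ, smul_smul]
      congr 2
      rw [hcdef]
      field_simp
    rw [h1, norm_smul, mul_pow, Real.norm_eq_abs, sq_abs]
    congr 1
    rw [EuclideanSpace.norm_eq, Real.sq_sqrt (by positivity)]
    refine Finset.sum_congr rfl fun k _ => ?_
    rw [Real.norm_eq_abs, sq_abs]
    congr 1
    rw [WithLp.ofLp_sum, Finset.sum_apply]
    refine Finset.sum_congr rfl fun i _ => ?_
    rw [PiLp.sub_apply, dFvec_apply]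
  -- assemble
  have hQnonneg : 0 ≤ Q := by
    rw [hQdef]; exact integral_nonneg fun ξ => sq_nonneg _
  have hswap : ∫ ω, (∑ k, (∑ i, W i k ω) ^ 2) ∂P
      = ∑ k, ∑ i, ∑ j, ∫ ω, W i k ω * W j k ω ∂P := by
    have h1 : ∀ (k : Fin d) (ω : Ω), (∑ i, W i k ω) ^ 2
        = ∑ i, ∑ j, W i k ω * W j k ω := by
      intro k ω; rw [sq, Finset.sum_mul_sum]
    simp_rw [h1]
    rw [integral_finset_sum _ (fun k _ => integrable_finset_sum _ fun i _ =>
      integrable_finset_sum _ fun j _ => hprod_int i j k)]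
    refine Finset.sum_congr rfl fun k _ => ?_
    rw [integral_finset_sum _ (fun i _ => integrable_finset_sum _ fun j _ => hprod_int i j k)]
    refine Finset.sum_congr rfl fun i _ => ?_
    rw [integral_finset_sum _ fun j _ => hprod_int i j k]
  have hsum_le : ∑ k, ∑ i, ∑ j, ∫ ω, W i k ω * W j k ω ∂P
      ≤ (M : ℝ) * ((d : ℝ) * (α ^ 2 * Q)) := by
    have hdiagsum : ∀ (k : Fin d) (i : Fin M),
        ∑ j, ∫ ω, W i k ω * W j k ω ∂P = ∫ ω, (W i k ω) ^ 2 ∂P := by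
      intro k i
      rw [Finset.sum_eq_single i (fun j _ hji => hcross i j (Ne.symm hji) k) (by simp)]
      refine integral_congr_ae (ae_of_all _ fun ω => ?_)
      ring
    simp_rw [hdiagsum]
    rw [Finset.sum_comm]
    calc ∑ i : Fin M, ∑ k, ∫ ω, (W i k ω) ^ 2 ∂P
        ≤ ∑ i : Fin M, ∑ k : Fin d, α ^ 2 * Q :=
          Finset.sum_le_sum fun i _ => Finset.sum_le_sum fun k _ => hvar i k
      _ = (M : ℝ) * ((d : ℝ) * (α ^ 2 * Q)) := by
          simp [Finset.sum_const, Finset.card_univ, mul_assoc]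
  calc ∫ ω, ‖(α⁻¹ • m) - c • ∑ i, dFvec α F w (U i ω) (X i ω)‖ ^ 2 ∂P
      = c ^ 2 * ∫ ω, (∑ k, (∑ i, W i k ω) ^ 2) ∂P := by
        rw [← integral_const_mul]
        exact integral_congr_ae (ae_of_all _ fun ω => hpt ω)
    _ ≤ c ^ 2 * ((M : ℝ) * ((d : ℝ) * (α ^ 2 * Q))) := by
        refine mul_le_mul_of_nonneg_left ?_ (sq_nonneg c)
        rw [hswap]
        exact hsum_le
    _ = (d : ℝ) * Q / (M : ℝ) := by
        rw [hcdef]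
        field_simp
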